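/- Let D : Fin n → ℝ^d be a design, δ ∈ ℝ^d a tolerance vector with δ_i ≥ 0 for all i, p ∈ ℝ^d, and let D + p denote the translated design defined by (D + p) j = D j + p. Then an order ideal O ⊆ ℕ^d is numerically stable for (D + p, δ) if and only if it is numerically stable for (D, δ); consequently the numerical statistical fan is translation invariant: S_num(D + p, δ) = S_num(D, δ). -/

import Mathlib

open Finset

/-- An order ideal (hierarchical model) in ℕ^d: a finite set of exponent vectors
that is downward closed for the componentwise partial order. -/
def IsOrderIdeal {d : ℕ} (O : Finset (Fin d → ℕ)) : Prop :=
  ∀ α ∈ O, ∀ β : Fin d → ℕ, (∀ i, β i ≤ α i) → β ∈ O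

/-- γ belongs to the corner set of O: γ is a minimal element of the complement of O
with respect to the componentwise partial order. -/
def InCorner {d : ℕ} (O : Finset (Fin d → ℕ)) (γ : Fin d → ℕ) : Prop :=
  γ ∉ O ∧ ∀ β : Fin d → ℕ, β ∉ O → (∀ i, β i ≤ γ i) → β = γ

/-- Evaluation (design) vector of the monomial X^α at the design D. -/
def evalVec {n d : ℕ} (D : Fin n → Fin d → ℝ) (α : Fin d → ℕ) : Fin n → ℝ :=
  fun j => ∏ i, (D j i) ^ (α i)

/-- D' is a δ-perturbation of D. -/
def IsPerturbation {n d : ℕ} (δ : Fin d → ℝ) (D D' : Fin n → Fin d → ℝ) : Prop :=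
  ∀ j : Fin n, ∀ i : Fin d, |D' j i - D j i| < δ i

/-- O is numerically stable for the empirical design (D, δ): for every δ-perturbation D'
of D, the family of evaluation vectors (X^α(D'))_{α ∈ O} is linearly independent. -/
def NumStable {n d : ℕ} (D : Fin n → Fin d → ℝ) (δ : Fin d → ℝ)
    (O : Finset (Fin d → ℕ)) : Prop :=
  ∀ D' : Fin n → Fin d → ℝ, IsPerturbation δ D D' →
    LinearIndependent ℝ (fun α : {x // x ∈ O} => evalVec D' α.1)

/-- X^γ(D) numerically depends on O at (D, δ): there is a δ-perturbation D' of D such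
that X^γ(D') lies in the linear span of the evaluation vectors of O at D'. -/
def NumDepends {n d : ℕ} (D : Fin n → Fin d → ℝ) (δ : Fin d → ℝ)
    (O : Finset (Fin d → ℕ)) (γ : Fin d → ℕ) : Prop :=
  ∃ D' : Fin n → Fin d → ℝ, IsPerturbation δ D D' ∧
    evalVec D' γ ∈ Submodule.span ℝ ((fun α => evalVec D' α) '' (O : Set (Fin d → ℕ)))

/-- Binomial transition weights. -/
noncomputable def wgt {d : ℕ} (p : Fin d → ℝ) (α β : Fin d → ℕ) : ℝ :=
  ∏ i, ((α i).choose (β i) : ℝ) * p i ^ (α i - β i)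

lemma wgt_self {d : ℕ} (p : Fin d → ℝ) (α : Fin d → ℕ) : wgt p α α = 1 := by
  simp [wgt]

lemma wgt_eq_zero {d : ℕ} (p : Fin d → ℝ) {α β : Fin d → ℕ} (h : ¬ ∀ i, β i ≤ α i) :
    wgt p α β = 0 := by
  push_neg at h
  obtain ⟨i, hi⟩ := h
  exact Finset.prod_eq_zero (Finset.mem_univ i) (by simp [Nat.choose_eq_zero_of_lt hi])

lemma binom_prod {d : ℕ} (p x : Fin d → ℝ) {O : Finset (Fin d → ℕ)}
    (hO : IsOrderIdeal O) {α : Fin d → ℕ} (hα : α ∈ O) :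
    ∏ i, (x i + p i) ^ (α i) = ∑ β ∈ O, wgt p α β * ∏ i, x i ^ (β i) := by
  classical
  set B : Finset (Fin d → ℕ) := Fintype.piFinset (fun i => Finset.range (α i + 1)) with hB
  have hmemB : ∀ β : Fin d → ℕ, β ∈ B ↔ ∀ i, β i ≤ α i := by
    intro β
    simp [hB, Fintype.mem_piFinset, Nat.lt_succ_iff]
  have hBO : B ⊆ O := fun β hβ => hO α hα β ((hmemB β).1 hβ)
  have h1 : ∑ β ∈ O, wgt p α β * ∏ i, x i ^ (β i)
      = ∑ β ∈ B, wgt p α β * ∏ i, x i ^ (β i) := by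
    refine (Finset.sum_subset hBO ?_).symm
    intro β _ hβ
    rw [wgt_eq_zero p ((hmemB β).not.1 hβ), zero_mul]
  rw [h1]
  have h2 : ∀ i, (x i + p i) ^ (α i)
      = ∑ m ∈ Finset.range (α i + 1), x i ^ m * p i ^ (α i - m) * ((α i).choose m : ℝ) :=
    fun i => add_pow (x i) (p i) (α i)
  calc ∏ i, (x i + p i) ^ (α i)
      = ∏ i, ∑ m ∈ Finset.range (α i + 1),
          x i ^ m * p i ^ (α i - m) * ((α i).choose m : ℝ) := by
        exact Finset.prod_congr rfl fun i _ => h2 i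
    _ = ∑ β ∈ B, ∏ i, (x i ^ (β i) * p i ^ (α i - β i) * ((α i).choose (β i) : ℝ)) := by
        rw [Finset.prod_univ_sum]
    _ = ∑ β ∈ B, wgt p α β * ∏ i, x i ^ (β i) := by
        refine Finset.sum_congr rfl fun β _ => ?_
        rw [wgt, ← Finset.prod_mul_distrib]
        exact Finset.prod_congr rfl fun i _ => by ring

/-- One-directional translation lemma. -/
lemma numStable_translate {n d : ℕ} (D : Fin n → Fin d → ℝ) (δ : Fin d → ℝ)
    (p : Fin d → ℝ) {O : Finset (Fin d → ℕ)} (hO : IsOrderIdeal O)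
    (h : NumStable D δ O) : NumStable (fun j => D j + p) δ O := by
  classical
  intro D'' hpert
  set D' : Fin n → Fin d → ℝ := fun j i => D'' j i - p i with hD'def
  have hD' : IsPerturbation δ D D' := by
    intro j i
    have := hpert j i
    simp only [Pi.add_apply] at this
    have heq : D' j i - D j i = D'' j i - (D j i + p i) := by simp [hD'def]; ring
    rwa [heq]
  have hli := h D' hD'
  rw [Fintype.linearIndependent_iff] at hli ⊢
  intro g hg
  -- transformed coefficients
  set c : {x // x ∈ O} → ℝ := fun β => ∑ α : {x // x ∈ O}, g α * wgt p α.1 β.1 with hc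
  have hkey : ∀ j : Fin n, ∀ α : Fin d → ℕ, α ∈ O →
      evalVec D'' α j = ∑ β ∈ O, wgt p α β * ∏ i, (D' j i) ^ (β i) := by
    intro j α hα
    have : evalVec D'' α j = ∏ i, (D' j i + p i) ^ (α i) := by
      simp [evalVec, hD'def]
    rw [this, binom_prod p _ hO hα]
  have hg' : ∑ β : {x // x ∈ O}, c β • evalVec D' β.1 = 0 := by
    funext j
    have h0 : ∑ α : {x // x ∈ O}, g α * evalVec D'' α.1 j = 0 := by
      have := congrFun hg j
      simpa [Finset.sum_apply] using this
    have : (∑ β : {x // x ∈ O}, c β • evalVec D' β.1) j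
        = ∑ α : {x // x ∈ O}, g α * evalVec D'' α.1 j := by
      rw [Finset.sum_apply]
      simp only [Pi.smul_apply, smul_eq_mul, hc, Finset.sum_mul]
      rw [Finset.sum_comm]
      refine Finset.sum_congr rfl fun α _ => ?_
      rw [hkey j α.1 α.2, Finset.mul_sum, ← Finset.sum_attach O
        (fun β => g α * (wgt p α.1 β * ∏ i, D' j i ^ β i))]
      simp only [Finset.univ_eq_attach]
      refine Finset.sum_congr rfl fun β _ => ?_
      simp only [evalVec]
      ring
    rw [this, h0]; rfl
  have hc0 : ∀ β : {x // x ∈ O}, c β = 0 := hli c hg'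
  -- now deduce g = 0 using maximal elements
  by_contra hne
  push_neg at hne
  obtain ⟨α₀, hα₀⟩ := hne
  set S : Finset {x // x ∈ O} := Finset.univ.filter (fun β => g β ≠ 0) with hS
  have hSne : S.Nonempty := ⟨α₀, by simp [hS, hα₀]⟩
  obtain ⟨m, hmS, hmax⟩ : ∃ m ∈ S, ∀ x ∈ S, ¬ m < x := by
    obtain ⟨m, hm⟩ := Finset.exists_maximal hSne
    exact ⟨m, hm.1, fun x hx hlt => lt_irrefl _ (lt_of_lt_of_le hlt (hm.2 hx hlt.le))⟩
  have hgm : g m ≠ 0 := by simpa [hS] using hmS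
  have : c m = g m := by
    simp only [hc]
    rw [Finset.sum_eq_single m]
    · rw [wgt_self, mul_one]
    · intro b _ hbm
      by_cases hb : g b = 0
      · rw [hb, zero_mul]
      · by_cases hle : ∀ i, m.1 i ≤ b.1 i
        · exfalso
          apply hmax b (by simp [hS, hb])
          refine lt_of_le_of_ne ?_ (Ne.symm hbm)
          exact Subtype.coe_le_coe.mp (by exact hle)
        · rw [wgt_eq_zero p hle, mul_zero]
    · intro hm; exact absurd (Finset.mem_univ m) hm
  rw [hc0 m] at this
  exact hgm this.symm

theorem stmt_13 {n d : ℕ} (D : Fin n → Fin d → ℝ) (δ : Fin d → ℝ)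
    (hδ : ∀ i, 0 ≤ δ i) (p : Fin d → ℝ) :
    (∀ O : Finset (Fin d → ℕ), IsOrderIdeal O →
      (NumStable (fun j => D j + p) δ O ↔ NumStable D δ O)) ∧
    {M : Finset (Fin d → ℕ) | IsOrderIdeal M ∧ NumStable (fun j => D j + p) δ M ∧
      ¬ ∃ O' : Finset (Fin d → ℕ), IsOrderIdeal O' ∧ NumStable (fun j => D j + p) δ O' ∧ M ⊂ O'} =
    {M : Finset (Fin d → ℕ) | IsOrderIdeal M ∧ NumStable D δ M ∧
      ¬ ∃ O' : Finset (Fin d → ℕ), IsOrderIdeal O' ∧ NumStable D δ O' ∧ M ⊂ O'} := by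
  have main : ∀ O : Finset (Fin d → ℕ), IsOrderIdeal O →
      (NumStable (fun j => D j + p) δ O ↔ NumStable D δ O) := by
    intro O hO
    constructor
    · intro h
      have := numStable_translate (fun j => D j + p) δ (-p) hO h
      have heq : (fun j => (fun j => D j + p) j + (-p)) = D := by
        funext j; simp
      rwa [heq] at this
    · intro h
      exact numStable_translate D δ p hO h
  refine ⟨main, ?_⟩
  ext M
  simp only [Set.mem_setOf_eq]
  constructor
  · rintro ⟨h1, h2, h3⟩
    refine ⟨h1, (main M h1).1 h2, fun ⟨O', hO'1, hO'2, hO'3⟩ =>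
      h3 ⟨O', hO'1, (main O' hO'1).2 hO'2, hO'3⟩⟩
  · rintro ⟨h1, h2, h3⟩
    refine ⟨h1, (main M h1).2 h2, fun ⟨O', hO'1, hO'2, hO'3⟩ =>
      h3 ⟨O', hO'1, (main O' hO'1).1 hO'2, hO'3⟩⟩
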